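/- Let N ≥ 2 and 1 ≤ k ≤ N be natural numbers and let R : Fin N → ℝ be any function satisfying Σ_{i} R(i) = N(N+1)/2. Then (1/C(N,k)) · Σ_{S ⊆ Fin N, |S|=k} (Σ_{i∈S} R(i))² − (k(N+1)/2)² = (k(N−k)/(N−1)) · ( (1/N)·Σ_{i} R(i)² − (N+1)²/4 ). (This expresses that in the presence of ties, the rank-sum statistic W with sample sizes n₁ = k and n₂ = N − k has variance Var(W) = (n₁n₂/(n₁+n₂−1))·( (1/(n₁+n₂))·Σᵢ Rᵢ² − (n₁+n₂+1)²/4 ) under the null hypothesis.) -/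

import Mathlib

open Finset

lemma count_powersetCard_superset {α : Type*} [DecidableEq α] (s t : Finset α) (k : ℕ)
    (hts : t ⊆ s) (htk : t.card ≤ k) :
    ((powersetCard k s).filter (fun S => t ⊆ S)).card
      = (s.card - t.card).choose (k - t.card) := by
  rw [← card_sdiff_of_subset hts, ← card_powersetCard (k - t.card) (s \ t)]
  apply Finset.card_bij (fun S _ => S \ t)
  · intro S hS
    simp only [mem_filter, mem_powersetCard] at hS
    exact mem_powersetCard.2 ⟨sdiff_subset_sdiff hS.1.1 Subset.rfl,
      by rw [card_sdiff_of_subset hS.2, hS.1.2]⟩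
  · intro S1 h1 S2 h2 h
    simp only [mem_filter, mem_powersetCard] at h1 h2
    rw [← sdiff_union_of_subset h1.2, ← sdiff_union_of_subset h2.2, h]
  · intro U hU
    simp only [mem_powersetCard] at hU
    have hd : Disjoint U t := (subset_sdiff.1 hU.1).2
    refine ⟨U ∪ t, ?_, ?_⟩
    · simp only [mem_filter, mem_powersetCard]
      refine ⟨⟨union_subset ((subset_sdiff.1 hU.1).1) hts, ?_⟩, subset_union_right⟩
      rw [card_union_of_disjoint hd, hU.2, Nat.sub_add_cancel htk]
    · rw [union_sdiff_right, sdiff_eq_self_of_disjoint hd]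

/-- Variance of the rank-sum statistic in the presence of ties: if the ranks
`R : Fin N → ℝ` sum to `N(N+1)/2`, then, with sums over all `k`-element subsets
`S` of `Fin N`,
`(1/C(N,k)) Σ_S (Σ_{i∈S} R i)² − (k(N+1)/2)²
  = (k(N−k)/(N−1)) · ( (1/N) Σ_i (R i)² − (N+1)²/4 )`,
i.e. `Var(W) = (n₁n₂/(n₁+n₂−1)) ( (1/(n₁+n₂)) Σᵢ Rᵢ² − (n₁+n₂+1)²/4 )`. -/
theorem rank_sum_variance_with_ties (N k : ℕ) (hN : 2 ≤ N) (hk : 1 ≤ k)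
    (hkN : k ≤ N) (R : Fin N → ℝ)
    (hsum : ∑ i, R i = (N : ℝ) * ((N : ℝ) + 1) / 2) :
    (1 / (N.choose k : ℝ)) *
        (∑ S ∈ Finset.powersetCard k (Finset.univ : Finset (Fin N)),
          (∑ i ∈ S, R i) ^ 2) -
      ((k : ℝ) * ((N : ℝ) + 1) / 2) ^ 2 =
    ((k : ℝ) * ((N : ℝ) - (k : ℝ)) / ((N : ℝ) - 1)) *
      ((1 / (N : ℝ)) * ∑ i, (R i) ^ 2 - ((N : ℝ) + 1) ^ 2 / 4) := by
  classical
  set P := Finset.powersetCard k (Finset.univ : Finset (Fin N)) with hP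
  set Q : ℝ := ∑ i, (R i) ^ 2 with hQ
  set A : ℕ := (N - 1).choose (k - 1) with hA
  set b : ℕ := if 2 ≤ k then (N - 2).choose (k - 2) else 0 with hb
  -- counting facts
  have hcount1 : ∀ i : Fin N, (P.filter (fun S => i ∈ S)).card = A := by
    intro i
    have := count_powersetCard_superset (Finset.univ : Finset (Fin N)) {i} k
      (subset_univ _) (by simpa using hk)
    simpa [card_univ, singleton_subset_iff] using this
  have hcount2 : ∀ i j : Fin N, i ≠ j →
      (P.filter (fun S => i ∈ S ∧ j ∈ S)).card = b := by
    intro i j hij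
    by_cases h2 : 2 ≤ k
    · have hc : ({i, j} : Finset (Fin N)).card = 2 := card_pair hij
      have := count_powersetCard_superset (Finset.univ : Finset (Fin N)) {i, j} k
        (subset_univ _) (by rw [hc]; exact h2)
      rw [hb, if_pos h2]
      simpa [card_univ, hc, insert_subset_iff, singleton_subset_iff] using this
    · have hk1 : k = 1 := by omega
      rw [hb, if_neg h2]
      rw [Finset.card_eq_zero, Finset.filter_eq_empty_iff]
      intro S hS
      rw [hP, mem_powersetCard] at hS
      intro ⟨hi, hj⟩
      have : ({i, j} : Finset (Fin N)) ⊆ S := by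
        simp [insert_subset_iff, hi, hj]
      have := card_le_card this
      rw [card_pair hij, hS.2, hk1] at this
      omega
  -- the key expansion
  have key : ∑ S ∈ P, (∑ i ∈ S, R i) ^ 2
      = (A : ℝ) * Q + (b : ℝ) * ((∑ i, R i) ^ 2 - Q) := by
    have expand : ∀ S : Finset (Fin N), (∑ i ∈ S, R i) ^ 2
        = ∑ i, ∑ j, (if i ∈ S ∧ j ∈ S then R i * R j else 0) := by
      intro S
      rw [sq, Finset.sum_mul_sum]
      rw [← Finset.sum_subset (Finset.subset_univ S) (by intro i _ hi; simp [hi])]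
      refine Finset.sum_congr rfl fun i hi => ?_
      rw [← Finset.sum_subset (Finset.subset_univ S) (by intro j _ hj; simp [hj])]
      refine Finset.sum_congr rfl fun j hj => ?_
      simp [hi, hj]
    calc ∑ S ∈ P, (∑ i ∈ S, R i) ^ 2
        = ∑ S ∈ P, ∑ i, ∑ j, (if i ∈ S ∧ j ∈ S then R i * R j else 0) := by
          exact Finset.sum_congr rfl fun S _ => expand S
      _ = ∑ i, ∑ j, ∑ S ∈ P, (if i ∈ S ∧ j ∈ S then R i * R j else 0) := by
          rw [Finset.sum_comm]
          exact Finset.sum_congr rfl fun i _ => Finset.sum_comm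
      _ = ∑ i, ∑ j, ((P.filter (fun S => i ∈ S ∧ j ∈ S)).card : ℝ) * (R i * R j) := by
          refine Finset.sum_congr rfl fun i _ => Finset.sum_congr rfl fun j _ => ?_
          rw [← Finset.sum_filter, Finset.sum_const, nsmul_eq_mul]
      _ = ∑ i, ((A : ℝ) * (R i * R i)
            + ∑ j ∈ Finset.univ.erase i, (b : ℝ) * (R i * R j)) := by
          refine Finset.sum_congr rfl fun i _ => ?_
          rw [← Finset.sum_erase_add _ _ (mem_univ i)]
          rw [add_comm]
          congr 1
          · have : (P.filter (fun S => i ∈ S ∧ i ∈ S)) = P.filter (fun S => i ∈ S) :=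
              Finset.filter_congr (by intro S _; simp)
            rw [this, hcount1 i]
          · refine Finset.sum_congr rfl fun j hj => ?_
            rw [hcount2 i j (by rintro rfl; exact (mem_erase.1 hj).1 rfl)]
      _ = (A : ℝ) * Q + (b : ℝ) * ((∑ i, R i) ^ 2 - Q) := by
          rw [Finset.sum_add_distrib]
          congr 1
          · rw [← Finset.mul_sum, hQ]
            congr 1
            exact Finset.sum_congr rfl fun i _ => (sq (R i)).symm
          · have hoff : ∀ i : Fin N, ∑ j ∈ Finset.univ.erase i, R i * R j
                = R i * (∑ j, R j) - R i ^ 2 := by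
              intro i
              rw [← Finset.mul_sum]
              rw [show (∑ j ∈ Finset.univ.erase i, R j) = (∑ j, R j) - R i by
                rw [← Finset.sum_erase_add _ _ (mem_univ i)]; ring]
              ring
            have h1 : ∀ i : Fin N, ∑ j ∈ Finset.univ.erase i, (b : ℝ) * (R i * R j)
                = (b : ℝ) * (R i * (∑ j, R j) - R i ^ 2) := by
              intro i; rw [← Finset.mul_sum, hoff i]
            rw [Finset.sum_congr rfl fun i _ => h1 i, ← Finset.mul_sum]
            congr 1
            rw [Finset.sum_sub_distrib, ← Finset.sum_mul, sq, hQ]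
  -- numeric facts
  have hNne : (N : ℝ) ≠ 0 := by positivity
  have hN1 : (N : ℝ) - 1 ≠ 0 := by
    have : (2 : ℝ) ≤ (N : ℝ) := by exact_mod_cast hN
    linarith
  have hC : (N.choose k : ℝ) ≠ 0 := by
    exact_mod_cast (Nat.choose_pos hkN).ne'
  have hA' : (N : ℝ) * A = (N.choose k : ℝ) * k := by
    have h := Nat.add_one_mul_choose_eq (N - 1) (k - 1)
    rw [show N - 1 + 1 = N by omega, show k - 1 + 1 = k by omega] at h
    exact_mod_cast h
  have hAr : (A : ℝ) = (N.choose k : ℝ) * k / N := by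
    rw [eq_div_iff hNne]; linarith [hA']
  have hB' : ((N : ℝ) - 1) * b = (A : ℝ) * ((k : ℝ) - 1) := by
    by_cases h2 : 2 ≤ k
    · have h := Nat.add_one_mul_choose_eq (N - 2) (k - 2)
      rw [show N - 2 + 1 = N - 1 by omega, show k - 2 + 1 = k - 1 by omega] at h
      rw [hb, if_pos h2]
      have h' : ((N - 1 : ℕ) : ℝ) * ((N - 2).choose (k - 2) : ℝ)
          = ((N - 1).choose (k - 1) : ℝ) * ((k - 1 : ℕ) : ℝ) := by exact_mod_cast h
      rw [Nat.cast_sub (by omega : 1 ≤ N), Nat.cast_sub hk] at h'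
      simpa [hA] using h'
    · have hk1 : k = 1 := by omega
      rw [hb, if_neg h2, hk1]
      simp
  have hbr : (b : ℝ) = (N.choose k : ℝ) * k * ((k : ℝ) - 1) / ((N : ℝ) * ((N : ℝ) - 1)) := by
    rw [eq_div_iff (mul_ne_zero hNne hN1)]
    have : (b : ℝ) * ((N : ℝ) - 1) = (A : ℝ) * ((k : ℝ) - 1) := by linarith [hB']
    calc (b : ℝ) * ((N : ℝ) * ((N : ℝ) - 1)) = ((b : ℝ) * ((N : ℝ) - 1)) * N := by ring
      _ = (A : ℝ) * ((k : ℝ) - 1) * N := by rw [this]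
      _ = ((N : ℝ) * A) * ((k : ℝ) - 1) := by ring
      _ = (N.choose k : ℝ) * k * ((k : ℝ) - 1) := by rw [hA']
  rw [key, hsum, hAr, hbr]
  field_simp
  ring
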